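/- Let X and Y be forests over an alphabet 𝒳 with m = |X|, and let δ̄ = δ₁,…,δ_T be an edit script with δ̄(X) = Y. Define M_δ̄ recursively by: M_ε = {(1,1),…,(m,m)}; if the last edit is a replacement, M is unchanged; if the last edit is a deletion of the node with current pre-order index j, then every pair (i, j′) with j′ < j is kept, every pair (i, j′) with j′ > j becomes (i, j′ − 1), and any pair with second coordinate j is removed; if the last edit is an insertion at current pre-order position j, then every pair (i, j′) with j′ < j is kept and every pair (i, j′) with j′ ≥ j becomes (i, j′ + 1). Then M_δ̄ is a tree mapping between X and Y. -/

import Mathlib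

namespace TED

/-- A tree over an alphabet `α`: a label together with a (possibly empty) list of children. -/
inductive PTree (α : Type) where
  | node : α → List (PTree α) → PTree α

/-- A forest over `α` is a finite list of trees; `[]` is the empty forest `ε`. -/
abbrev Forest (α : Type) := List (PTree α)

namespace PTree

/-- The label of (the root of) a tree. -/
def label {α : Type} : PTree α → α
  | node a _ => a

/-- The children of (the root of) a tree. -/
def children {α : Type} : PTree α → List (PTree α)
  | node _ cs => cs

mutual
  /-- The number of nodes of a tree. -/
  def size {α : Type} : PTree α → ℕ
    | node _ cs => 1 + sizeL cs
  /-- The number of nodes of a forest. -/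
  def sizeL {α : Type} : List (PTree α) → ℕ
    | [] => 0
    | t :: ts => size t + sizeL ts
end

mutual
  /-- The pre-order list of all subtrees of a tree. -/
  def subtreesT {α : Type} : PTree α → List (PTree α)
    | node a cs => node a cs :: subtreesL cs
  /-- The pre-order list of all subtrees of a forest. -/
  def subtreesL {α : Type} : List (PTree α) → List (PTree α)
    | [] => []
    | t :: ts => subtreesT t ++ subtreesL ts
end

end PTree

open PTree

/-- The pre-order `π(X)` of a forest: the list of all its subtrees. -/
def preorder {α : Type} (F : Forest α) : List (PTree α) := PTree.subtreesL F

/-- The size `|X|` of a forest: the length of its pre-order. -/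
def fsize {α : Type} (F : Forest α) : ℕ := (preorder F).length

/-- The `i`-th subtree `x̄_i` (1-indexed pre-order) of a forest, if it exists. -/
def treeAt {α : Type} (F : Forest α) (i : ℕ) : Option (PTree α) := (preorder F)[i - 1]?

/-- The label `x_i` of the `i`-th subtree, as an element of `𝒳 ∪ {−}`
(`none` plays the role of the gap symbol `−`). -/
def labelAt {α : Type} (F : Forest α) (i : ℕ) : Option α := (treeAt F i).map PTree.label

/-- The number of nodes of the `i`-th subtree `x̄_i`. -/
def sizeAt {α : Type} (F : Forest α) (i : ℕ) : ℕ := ((treeAt F i).map PTree.size).getD 0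

/-- A cost function over `α`: a real-valued function on `(𝒳 ∪ {−}) × (𝒳 ∪ {−})`,
where the gap symbol `−` is modelled by `none`. -/
abbrev Cost (α : Type) := Option α → Option α → ℝ

/-- `c` is non-negative. -/
def Nonneg {α : Type} (c : Cost α) : Prop := ∀ x y, 0 ≤ c x y
/-- `c` is self-equal. -/
def SelfEq {α : Type} (c : Cost α) : Prop := ∀ x, c x x = 0
/-- `c` is discernible. -/
def Discernible {α : Type} (c : Cost α) : Prop := ∀ x y, x ≠ y → 0 < c x y
/-- `c` is symmetric. -/
def Symm {α : Type} (c : Cost α) : Prop := ∀ x y, c x y = c y x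
/-- `c` conforms to the triangular inequality. -/
def Triangle {α : Type} (c : Cost α) : Prop := ∀ x y z, c x z ≤ c x y + c y z

/-- Deletion of the first root: its children are spliced into its place. -/
def delRoot {α : Type} : Forest α → Forest α
  | [] => []
  | PTree.node _ cs :: ts => cs ++ ts

/-- Replacement of the label of the first root by `y`. -/
def repRoot {α : Type} (y : α) : Forest α → Forest α
  | [] => []
  | PTree.node _ cs :: ts => PTree.node y cs :: ts

/-- Insertion of a new root labeled `y` at root level, adopting the trees
`l` to `r-1` of the forest as its children. -/
def insRoot {α : Type} (y : α) (l r : ℕ) (F : Forest α) : Forest α :=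
  if r > F.length + 1 ∨ l > r ∨ l < 1 then F
  else if l = r then F.take (l - 1) ++ [PTree.node y []] ++ F.drop (l - 1)
  else F.take (l - 1) ++ [PTree.node y ((F.drop (l - 1)).take (r - l))] ++ F.drop (r - 1)

/-- `del_i`: deletion of the node with pre-order index `i`. -/
def applyDel {α : Type} : ℕ → Forest α → Forest α
  | _, [] => []
  | i, PTree.node a cs :: ts =>
    if i < 1 then PTree.node a cs :: ts
    else if i = 1 then delRoot (PTree.node a cs :: ts)
    else if i ≤ size (PTree.node a cs) then PTree.node a (applyDel (i - 1) cs) :: ts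
    else PTree.node a cs :: applyDel (i - size (PTree.node a cs)) ts
  termination_by _ F => sizeOf F

/-- `rep_{i,y}`: replacement of the label of the node with pre-order index `i` by `y`. -/
def applyRep {α : Type} (y : α) : ℕ → Forest α → Forest α
  | _, [] => []
  | i, PTree.node a cs :: ts =>
    if i < 1 then PTree.node a cs :: ts
    else if i = 1 then repRoot y (PTree.node a cs :: ts)
    else if i ≤ size (PTree.node a cs) then PTree.node a (applyRep y (i - 1) cs) :: ts
    else PTree.node a cs :: applyRep y (i - size (PTree.node a cs)) ts
  termination_by _ F => sizeOf F

/-- `ins_{i,y,l,r}`: insertion of a node labeled `y` as a child of the node with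
pre-order index `i` (at root level if `i = 0`), adopting that node's children
`l` through `r-1` as its children. -/
def applyIns {α : Type} (y : α) (l r : ℕ) : ℕ → Forest α → Forest α
  | 0, F => insRoot y l r F
  | _ + 1, [] => []
  | i + 1, PTree.node a cs :: ts =>
    if i + 1 ≤ size (PTree.node a cs) then PTree.node a (applyIns y l r i cs) :: ts
    else PTree.node a cs :: applyIns y l r (i + 1 - size (PTree.node a cs)) ts
  termination_by _ F => sizeOf F

/-- The standard edits: deletions `del_i`, replacements `rep_{i,y}` and
insertions `ins_{i,y,l,r}`. -/
inductive Edit (α : Type) where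
  | del (i : ℕ)
  | rep (i : ℕ) (y : α)
  | ins (i : ℕ) (y : α) (l r : ℕ)

/-- Application of a single edit to a forest. -/
def Edit.apply {α : Type} : Edit α → Forest α → Forest α
  | .del i, F => applyDel i F
  | .rep i y, F => applyRep y i F
  | .ins i y l r, F => applyIns y l r i F

/-- Application of an edit script `δ̄ = δ₁,…,δ_T` to a forest (left to right). -/
def applyScript {α : Type} (δ : List (Edit α)) (F : Forest α) : Forest α :=
  δ.foldl (fun F e => e.apply F) F

/-- `x̄_k` is a (proper) ancestor of `x̄_i`, expressed via 1-indexed pre-order indices: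
the descendants of `x̄_k` occupy exactly the pre-order indices `k+1, …, k + |x̄_k| - 1`. -/
def AncestorIdx {α : Type} (F : Forest α) (k i : ℕ) : Prop :=
  k < i ∧ i < k + sizeAt F k

/-- A tree mapping between two forests: a set `M ⊆ {1,…,|F|} × {1,…,|G|}` such that
for all `(i,j), (i',j') ∈ M` we have `i = i' ↔ j = j'`, `i ≤ i' ↔ j ≤ j'`, and
`x̄_i` is an ancestor of `x̄_{i'}` iff `ȳ_j` is an ancestor of `ȳ_{j'}`. -/
def IsTreeMapping {α : Type} (F G : Forest α) (M : Finset (ℕ × ℕ)) : Prop :=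
  (∀ p ∈ M, 1 ≤ p.1 ∧ p.1 ≤ fsize F ∧ 1 ≤ p.2 ∧ p.2 ≤ fsize G) ∧
  (∀ p ∈ M, ∀ q ∈ M,
    (p.1 = q.1 ↔ p.2 = q.2) ∧
    (p.1 ≤ q.1 ↔ p.2 ≤ q.2) ∧
    (AncestorIdx F p.1 q.1 ↔ AncestorIdx G p.2 q.2))

/-- The cost `c(M, X, Y)` of a tree mapping: the sum of the replacement costs of
the mapped pairs, the deletion costs of the unmapped nodes of `X`, and the
insertion costs of the unmapped nodes of `Y`. -/
noncomputable def mapCost {α : Type} (c : Cost α) (F G : Forest α) (M : Finset (ℕ × ℕ)) : ℝ :=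
  (∑ p ∈ M, c (labelAt F p.1) (labelAt G p.2))
  + (∑ i ∈ (Finset.Icc 1 (fsize F)).filter (fun i => ∀ p ∈ M, p.1 ≠ i), c (labelAt F i) none)
  + (∑ j ∈ (Finset.Icc 1 (fsize G)).filter (fun j => ∀ p ∈ M, p.2 ≠ j), c none (labelAt G j))

/-- A co-optimal tree mapping: a tree mapping of minimum cost. -/
def IsCoOptimal {α : Type} (c : Cost α) (F G : Forest α) (M : Finset (ℕ × ℕ)) : Prop :=
  IsTreeMapping F G M ∧
  ∀ M' : Finset (ℕ × ℕ), IsTreeMapping F G M' → mapCost c F G M ≤ mapCost c F G M'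

/-- The pre-order index (in the output forest) of the node inserted by the edit
`ins_{i,y,l,r}` applied to `F`. -/
def insPos {α : Type} (F : Forest α) (i l : ℕ) : ℕ :=
  if i = 0 then PTree.sizeL (F.take (l - 1)) + 1
  else
    match treeAt F i with
    | some t => i + PTree.sizeL (t.children.take (l - 1)) + 1
    | none => 0

open Classical in
/-- One step of the recursive construction of the mapping corresponding to an edit
script: `F` is the forest to which the edit `e` is applied, and `M` is the mapping
constructed for the preceding edits. Replacements (and ineffective edits) leave the
mapping unchanged; a deletion of the node with current pre-order index `j` removes
the pair with second coordinate `j` and decrements all larger second coordinates;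
an insertion at current pre-order position `j` increments all second coordinates `≥ j`. -/
noncomputable def stepMap {α : Type} (F : Forest α) (e : Edit α) (M : Finset (ℕ × ℕ)) :
    Finset (ℕ × ℕ) :=
  if e.apply F = F then M
  else
    match e with
    | .rep _ _ => M
    | .del j =>
        (M.filter (fun p => p.2 < j)) ∪
          ((M.filter (fun p => j < p.2)).image (fun p => (p.1, p.2 - 1)))
    | .ins i _ l _ =>
        (M.filter (fun p => p.2 < insPos F i l)) ∪
          ((M.filter (fun p => insPos F i l ≤ p.2)).image (fun p => (p.1, p.2 + 1)))

/-- The mapping `M_δ̄` corresponding to an edit script `δ̄` applied to a forest `F`: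
start with the identity mapping `{(1,1),…,(|F|,|F|)}` and update it edit by edit. -/
noncomputable def mapOfScript {α : Type} (δ : List (Edit α)) (F : Forest α) : Finset (ℕ × ℕ) :=
  (δ.foldl (fun st e => (e.apply st.1, stepMap st.1 e st.2))
    (F, (Finset.Icc 1 (fsize F)).image (fun i => (i, i)))).2

section Aux

variable {α : Type}

/-- Custom induction principle for forests, recursing into children and siblings. -/
theorem Forest.myrec {motive : Forest α → Prop} (nil : motive [])
    (cons : ∀ (a : α) (cs ts : Forest α), motive cs → motive ts →
      motive (PTree.node a cs :: ts)) :
    ∀ F : Forest α, motive F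
  | [] => nil
  | PTree.node a cs :: ts => cons a cs ts (Forest.myrec nil cons cs) (Forest.myrec nil cons ts)
  termination_by F => sizeOf F

theorem subtreesL_append (A B : Forest α) :
    subtreesL (A ++ B) = subtreesL A ++ subtreesL B := by
  induction A with
  | nil => simp [subtreesL]
  | cons t ts ih =>
    cases t with
    | node a cs => simp [subtreesL, subtreesT, ih]

theorem preorder_cons (a : α) (cs ts : Forest α) :
    preorder (PTree.node a cs :: ts) = PTree.node a cs :: (preorder cs ++ preorder ts) := by
  simp [preorder, subtreesL, subtreesT]

theorem preorder_append (A B : Forest α) : preorder (A ++ B) = preorder A ++ preorder B :=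
  subtreesL_append A B

theorem fsize_nil : fsize ([] : Forest α) = 0 := rfl

theorem fsize_append (A B : Forest α) : fsize (A ++ B) = fsize A + fsize B := by
  simp [fsize, preorder_append]

theorem fsize_cons (a : α) (cs ts : Forest α) :
    fsize (PTree.node a cs :: ts) = 1 + fsize cs + fsize ts := by
  simp [fsize, preorder_cons]; omega

theorem fsize_eq_sizeL (F : Forest α) : fsize F = sizeL F := by
  induction F using Forest.myrec with
  | nil => rfl
  | cons a cs ts ih1 ih2 =>
    rw [fsize_cons, ih1, ih2]; simp [sizeL, size]

theorem size_node (a : α) (cs : Forest α) : size (PTree.node a cs) = 1 + fsize cs := by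
  rw [fsize_eq_sizeL]; simp [size]

theorem size_pos (t : PTree α) : 1 ≤ size t := by
  cases t with | node a cs => rw [size_node]; omega

theorem treeAt_cons_one (a : α) (cs ts : Forest α) :
    treeAt (PTree.node a cs :: ts) 1 = some (PTree.node a cs) := by
  simp [treeAt, preorder_cons]

theorem treeAt_cons_mid (a : α) (cs ts : Forest α) {k : ℕ} (hk : 2 ≤ k)
    (hk2 : k ≤ 1 + fsize cs) :
    treeAt (PTree.node a cs :: ts) k = treeAt cs (k - 1) := by
  unfold treeAt
  have hlen : k - 2 < (preorder cs).length := by have h := hk2; unfold fsize at h; omega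
  rw [preorder_cons, show k - 1 = (k-2) + 1 by omega, List.getElem?_cons_succ,
    List.getElem?_append_left hlen]
  congr 1

theorem treeAt_cons_high (a : α) (cs ts : Forest α) {k : ℕ} (hk : 1 + fsize cs < k) :
    treeAt (PTree.node a cs :: ts) k = treeAt ts (k - (1 + fsize cs)) := by
  unfold treeAt
  have hlen : (preorder cs).length ≤ k - 2 := by have h := hk; unfold fsize at h; omega
  rw [preorder_cons, show k - 1 = (k-2) + 1 by omega, List.getElem?_cons_succ,
    List.getElem?_append_right hlen]
  congr 1
  have h := hk; unfold fsize at h ⊢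
  omega

theorem sizeAt_cons_one (a : α) (cs ts : Forest α) :
    sizeAt (PTree.node a cs :: ts) 1 = 1 + fsize cs := by
  simp [sizeAt, treeAt_cons_one, size_node]

theorem sizeAt_cons_mid (a : α) (cs ts : Forest α) {k : ℕ} (hk : 2 ≤ k)
    (hk2 : k ≤ 1 + fsize cs) :
    sizeAt (PTree.node a cs :: ts) k = sizeAt cs (k - 1) := by
  simp [sizeAt, treeAt_cons_mid a cs ts hk hk2]

theorem sizeAt_cons_high (a : α) (cs ts : Forest α) {k : ℕ} (hk : 1 + fsize cs < k) :
    sizeAt (PTree.node a cs :: ts) k = sizeAt ts (k - (1 + fsize cs)) := by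
  simp [sizeAt, treeAt_cons_high a cs ts hk]

theorem treeAt_isSome (F : Forest α) {k : ℕ} (h1 : 1 ≤ k) (h2 : k ≤ fsize F) :
    ∃ t, treeAt F k = some t := by
  have hlt : k - 1 < (preorder F).length := by unfold fsize at h2; omega
  exact ⟨_, List.getElem?_eq_getElem hlt⟩

theorem sizeAt_pos (F : Forest α) {k : ℕ} (h1 : 1 ≤ k) (h2 : k ≤ fsize F) :
    1 ≤ sizeAt F k := by
  obtain ⟨t, ht⟩ := treeAt_isSome F h1 h2
  simp [sizeAt, ht]
  exact size_pos t

theorem sizeAt_le (F : Forest α) : ∀ a, 1 ≤ a → a ≤ fsize F → a + sizeAt F a ≤ fsize F + 1 := by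
  induction F using Forest.myrec with
  | nil => intro a h1 h2; rw [fsize_nil] at h2; omega
  | cons x cs ts ih1 ih2 =>
    intro a h1 h2
    rw [fsize_cons] at h2 ⊢
    rcases Nat.lt_or_ge a 2 with ha | ha
    · have : a = 1 := by omega
      subst this
      rw [sizeAt_cons_one]; omega
    · rcases le_or_gt a (1 + fsize cs) with hm | hm
      · rw [sizeAt_cons_mid x cs ts ha hm]
        have := ih1 (a-1) (by omega) (by omega)
        omega
      · rw [sizeAt_cons_high x cs ts hm]
        have := ih2 (a - (1 + fsize cs)) (by omega) (by omega)
        omega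

theorem applyDel_oob (F : Forest α) : ∀ j, (j < 1 ∨ fsize F < j) → applyDel j F = F := by
  induction F using Forest.myrec with
  | nil => intro j h; rw [applyDel]
  | cons a cs ts ih1 ih2 =>
    intro j h
    rw [applyDel]
    rcases h with h | h
    · rw [if_pos h]
    · rw [fsize_cons] at h
      rw [if_neg (by omega), if_neg (by omega), if_neg (by rw [size_node]; omega),
        ih2 (j - size (PTree.node a cs)) (by right; rw [size_node]; omega)]

theorem fsize_applyDel (F : Forest α) : ∀ j, 1 ≤ j → j ≤ fsize F →
    fsize (applyDel j F) = fsize F - 1 := by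
  induction F using Forest.myrec with
  | nil => intro j h1 h2; rw [fsize_nil] at h2; omega
  | cons a cs ts ih1 ih2 =>
    intro j h1 h2
    rw [fsize_cons] at h2 ⊢
    rw [applyDel, if_neg (by omega)]
    by_cases hj1 : j = 1
    · rw [if_pos hj1]
      simp only [delRoot, fsize_append]
      omega
    · rw [if_neg hj1, size_node]
      by_cases hjm : j ≤ 1 + fsize cs
      · rw [if_pos hjm, fsize_cons, ih1 (j-1) (by omega) (by omega)]
        omega
      · rw [if_neg hjm, fsize_cons, ih2 (j - (1 + fsize cs)) (by omega) (by omega)]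
        omega

theorem sizeAt_cons_ge2 (a : α) (cs ts : Forest α) {k : ℕ} (hk : 2 ≤ k) :
    sizeAt (PTree.node a cs :: ts) k = sizeAt (cs ++ ts) (k - 1) := by
  unfold sizeAt treeAt
  rw [preorder_cons, preorder_append, show k - 1 = (k-2) + 1 by omega,
    List.getElem?_cons_succ]
  congr 2

theorem sizeAt_applyDel (F : Forest α) : ∀ j k, 1 ≤ j → j ≤ fsize F → 1 ≤ k → k ≤ fsize F →
    k ≠ j →
    sizeAt (applyDel j F) (if k < j then k else k - 1)
      = sizeAt F k - (if k < j ∧ j < k + sizeAt F k then 1 else 0) := by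
  induction F using Forest.myrec with
  | nil => intro j k _ h; rw [fsize_nil] at h; omega
  | cons a cs ts ih1 ih2 =>
    intro j k hj1 hj2 hk1 hk2 hkj
    rw [fsize_cons] at hj2 hk2
    rw [applyDel, if_neg (by omega)]
    by_cases hj : j = 1
    · subst hj
      rw [if_pos rfl, if_neg (show ¬ k < 1 by omega)]
      simp only [delRoot]
      rw [sizeAt_cons_ge2 a cs ts (by omega)]
      split_ifs <;> omega
    · rw [if_neg hj, size_node]
      by_cases hjm : j ≤ 1 + fsize cs
      · -- deletion inside the first tree
        rw [if_pos hjm]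
        have hcs : fsize (applyDel (j-1) cs) = fsize cs - 1 :=
          fsize_applyDel cs (j-1) (by omega) (by omega)
        by_cases hk1' : k = 1
        · subst hk1'
          rw [if_pos (by omega), sizeAt_cons_one a cs ts, sizeAt_cons_one, hcs]
          split_ifs <;> omega
        · have hk' : 2 ≤ k := by omega
          by_cases hkm : k ≤ 1 + fsize cs
          · have ih := ih1 (j-1) (k-1) (by omega) (by omega) (by omega) (by omega) (by omega)
            rw [sizeAt_cons_mid a cs ts hk' hkm]
            by_cases hlt : k < j
            · rw [if_pos hlt,
                sizeAt_cons_mid a _ ts hk' (by rw [hcs]; omega)]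
              rw [if_pos (by omega)] at ih
              rw [ih]
              split_ifs <;> omega
            · rw [if_neg hlt,
                sizeAt_cons_mid a _ ts (by omega) (by rw [hcs]; omega)]
              rw [if_neg (by omega)] at ih
              rw [ih]
              split_ifs <;> omega
          · rw [if_neg (by omega), sizeAt_cons_high a cs ts (by omega),
              sizeAt_cons_high a _ ts (by rw [hcs]; omega), hcs,
              show k - 1 - (1 + (fsize cs - 1)) = k - (1 + fsize cs) by omega]
            split_ifs <;> omega
      · -- deletion beyond the first tree
        rw [if_neg hjm]
        by_cases hk1' : k = 1
        · subst hk1'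
          rw [if_pos (by omega), sizeAt_cons_one a cs ts, sizeAt_cons_one]
          split_ifs <;> omega
        · have hk' : 2 ≤ k := by omega
          by_cases hkm : k ≤ 1 + fsize cs
          · have hle := sizeAt_le cs (k-1) (by omega) (by omega)
            rw [if_pos (by omega), sizeAt_cons_mid a cs ts hk' hkm,
              sizeAt_cons_mid a cs _ hk' hkm]
            split_ifs <;> omega
          · have ih := ih2 (j - (1+fsize cs)) (k - (1+fsize cs)) (by omega) (by omega)
              (by omega) (by omega) (by omega)
            rw [sizeAt_cons_high a cs ts (by omega)]
            by_cases hlt : k < j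
            · rw [if_pos hlt, sizeAt_cons_high a cs _ (by omega)]
              rw [if_pos (by omega)] at ih
              rw [ih]
              split_ifs <;> omega
            · rw [if_neg hlt, sizeAt_cons_high a cs _ (by omega),
                show k - 1 - (1 + fsize cs) = k - (1 + fsize cs) - 1 by omega]
              rw [if_neg (by omega)] at ih
              rw [ih]
              split_ifs <;> omega

theorem map_size_applyRep (y : α) (F : Forest α) : ∀ j,
    (preorder (applyRep y j F)).map size = (preorder F).map size := by
  induction F using Forest.myrec with
  | nil => intro j; rw [applyRep]
  | cons a cs ts ih1 ih2 =>
    intro j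
    rw [applyRep]
    by_cases h1 : j < 1
    · rw [if_pos h1]
    · rw [if_neg h1]
      by_cases h2 : j = 1
      · rw [if_pos h2]
        simp only [repRoot, preorder_cons, List.map_cons, size_node]
      · rw [if_neg h2]
        by_cases h3 : j ≤ size (PTree.node a cs)
        · rw [if_pos h3]
          have h := ih1 (j-1)
          have hlen : fsize (applyRep y (j-1) cs) = fsize cs := by
            unfold fsize
            rw [← List.length_map size, h, List.length_map]
          rw [preorder_cons, preorder_cons]
          simp only [List.map_cons, List.map_append]
          rw [h, size_node, size_node, hlen]
        · rw [if_neg h3, preorder_cons, preorder_cons]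
          simp only [List.map_cons, List.map_append]
          rw [ih2]

theorem fsize_applyRep (y : α) (j : ℕ) (F : Forest α) : fsize (applyRep y j F) = fsize F := by
  unfold fsize
  rw [← List.length_map size, map_size_applyRep, List.length_map]

theorem sizeAt_eq_map (F : Forest α) (k : ℕ) :
    sizeAt F k = (((preorder F).map size)[k-1]?).getD 0 := by
  simp [sizeAt, treeAt, List.getElem?_map]

theorem sizeAt_applyRep (y : α) (j : ℕ) (F : Forest α) (k : ℕ) :
    sizeAt (applyRep y j F) k = sizeAt F k := by
  rw [sizeAt_eq_map, sizeAt_eq_map, map_size_applyRep]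

theorem anc_applyRep (y : α) (j : ℕ) (F : Forest α) (a b : ℕ) :
    AncestorIdx (applyRep y j F) a b ↔ AncestorIdx F a b := by
  unfold AncestorIdx
  rw [sizeAt_applyRep]

theorem applyDel_boundary (y : α) (cs' : Forest α) : ∀ (A B : Forest α),
    applyDel (sizeL A + 1) (A ++ PTree.node y cs' :: B) = A ++ (cs' ++ B) := by
  intro A
  induction A with
  | nil =>
    intro B
    simp only [sizeL, List.nil_append]
    rw [applyDel, if_neg (by omega), if_pos (by omega)]
    simp [delRoot]
  | cons t ts ih =>
    intro B
    cases t with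
    | node a cs =>
      rw [List.cons_append, applyDel]
      have hsl : sizeL (PTree.node a cs :: ts) = size (PTree.node a cs) + sizeL ts := by
        simp [sizeL]
      rw [hsl]
      have hs := size_pos (PTree.node a cs)
      rw [if_neg (by omega), if_neg (by omega), if_neg (by omega),
        show size (PTree.node a cs) + sizeL ts + 1 - size (PTree.node a cs) = sizeL ts + 1
          by omega,
        ih B]
      simp

theorem insPos_zero (F : Forest α) (l : ℕ) :
    insPos F 0 l = sizeL (F.take (l-1)) + 1 := by
  unfold insPos
  rw [if_pos rfl]

theorem insPos_pos_eq (F : Forest α) {i : ℕ} (hi : 1 ≤ i) {t : PTree α}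
    (ht : treeAt F i = some t) (l : ℕ) :
    insPos F i l = i + sizeL (t.children.take (l-1)) + 1 := by
  unfold insPos
  rw [if_neg (by omega), ht]

theorem insPos_none (F : Forest α) {i : ℕ} (hi : 1 ≤ i) (ht : treeAt F i = none) (l : ℕ) :
    insPos F i l = 0 := by
  unfold insPos
  rw [if_neg (by omega), ht]

theorem insRoot_inverse (y : α) (l r : ℕ) (F : Forest α) (h : insRoot y l r F ≠ F) :
    applyDel (insPos F 0 l) (insRoot y l r F) = F := by
  rw [insPos_zero]
  unfold insRoot at h ⊢
  by_cases hg : r > F.length + 1 ∨ l > r ∨ l < 1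
  · rw [if_pos hg] at h
    exact absurd rfl h
  · rw [if_neg hg] at h ⊢
    by_cases hlr : l = r
    · rw [if_pos hlr] at h ⊢
      have hb := applyDel_boundary y [] (F.take (l-1)) (F.drop (l-1))
      rw [show F.take (l-1) ++ [PTree.node y []] ++ F.drop (l-1)
          = F.take (l-1) ++ (PTree.node y [] :: F.drop (l-1)) by simp, hb]
      simp [List.take_append_drop]
    · rw [if_neg hlr] at h ⊢
      have hb := applyDel_boundary y ((F.drop (l-1)).take (r-l)) (F.take (l-1)) (F.drop (r-1))
      rw [show F.take (l-1) ++ [PTree.node y ((F.drop (l-1)).take (r-l))] ++ F.drop (r-1)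
          = F.take (l-1) ++ (PTree.node y ((F.drop (l-1)).take (r-l)) :: F.drop (r-1))
          by simp, hb]
      have hlb : 1 ≤ l ∧ l ≤ r := by
        push_neg at hg
        exact ⟨hg.2.2, hg.2.1⟩
      have hd : F.drop (r-1) = (F.drop (l-1)).drop (r-l) := by
        rw [List.drop_drop]
        congr 1
        omega
      rw [hd, List.take_append_drop, List.take_append_drop]

theorem applyIns_inverse (y : α) (l r : ℕ) (F : Forest α) : ∀ i,
    applyIns y l r i F ≠ F → applyDel (insPos F i l) (applyIns y l r i F) = F := by
  induction F using Forest.myrec with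
  | nil =>
    intro i h
    match i with
    | 0 =>
      rw [applyIns] at h ⊢
      exact insRoot_inverse y l r [] h
    | i+1 =>
      rw [applyIns] at h
      exact absurd rfl h
  | cons a cs ts ih1 ih2 =>
    intro i h
    match i with
    | 0 =>
      rw [applyIns] at h ⊢
      exact insRoot_inverse y l r _ h
    | i+1 =>
      rw [applyIns] at h ⊢
      by_cases hS : i + 1 ≤ size (PTree.node a cs)
      · rw [if_pos hS] at h ⊢
        have hne : applyIns y l r i cs ≠ cs := by
          intro he; apply h; rw [he]
        have hinv := ih1 i hne
        have hdne : applyDel (insPos cs i l) (applyIns y l r i cs) ≠ applyIns y l r i cs := by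
          rw [hinv]; exact fun he => hne he.symm
        have hrange : 1 ≤ insPos cs i l ∧ insPos cs i l ≤ fsize (applyIns y l r i cs) := by
          by_contra hc
          exact hdne (applyDel_oob _ _ (by omega))
        have hfs := fsize_applyDel (applyIns y l r i cs) (insPos cs i l) hrange.1 hrange.2
        rw [hinv] at hfs
        have hip : insPos (PTree.node a cs :: ts) (i+1) l = insPos cs i l + 1 := by
          by_cases hi0 : i = 0
          · subst hi0
            rw [insPos_pos_eq (PTree.node a cs :: ts) (by omega) (treeAt_cons_one a cs ts) l,
              insPos_zero]
            simp [PTree.children]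
            omega
          · rw [size_node] at hS
            obtain ⟨t, htt⟩ := treeAt_isSome cs (k := i) (by omega) (by omega)
            rw [insPos_pos_eq (PTree.node a cs :: ts) (by omega)
                (by rw [treeAt_cons_mid a cs ts (by omega) (by omega)]
                    simpa using htt) l,
              insPos_pos_eq cs (by omega) htt l]
            omega
        rw [hip, applyDel, if_neg (by omega), if_neg (by omega),
          if_pos (by rw [size_node]; omega),
          show insPos cs i l + 1 - 1 = insPos cs i l by omega, hinv]
      · rw [if_neg hS] at h ⊢
        rw [size_node] at hS
        have hne : applyIns y l r (i + 1 - size (PTree.node a cs)) ts ≠ ts := by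
          intro he; apply h; rw [he]
        have hinv := ih2 _ hne
        have hdne : applyDel (insPos ts (i + 1 - size (PTree.node a cs)) l)
            (applyIns y l r (i + 1 - size (PTree.node a cs)) ts)
            ≠ applyIns y l r (i + 1 - size (PTree.node a cs)) ts := by
          rw [hinv]; exact fun he => hne he.symm
        have hrange : 1 ≤ insPos ts (i + 1 - size (PTree.node a cs)) l ∧
            insPos ts (i + 1 - size (PTree.node a cs)) l
              ≤ fsize (applyIns y l r (i + 1 - size (PTree.node a cs)) ts) := by
          by_contra hc
          exact hdne (applyDel_oob _ _ (by omega))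
        have hi2 : 1 ≤ i + 1 - size (PTree.node a cs) := by rw [size_node]; omega
        rcases htt : treeAt ts (i + 1 - size (PTree.node a cs)) with _ | t
        · exact absurd (insPos_none ts hi2 htt l) (by omega)
        · have hip : insPos (PTree.node a cs :: ts) (i+1) l
              = insPos ts (i + 1 - size (PTree.node a cs)) l + size (PTree.node a cs) := by
            rw [insPos_pos_eq (PTree.node a cs :: ts) (by omega)
                (by rw [treeAt_cons_high a cs ts (by omega)]
                    rw [show i + 1 - (1 + fsize cs) = i + 1 - size (PTree.node a cs)
                        by rw [size_node]]
                    exact htt) l,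
              insPos_pos_eq ts hi2 htt l, size_node]
            omega
          rw [hip, applyDel, if_neg (by omega),
            if_neg (by have := size_pos (PTree.node a cs); omega),
            if_neg (by omega),
            show insPos ts (i + 1 - size (PTree.node a cs)) l + size (PTree.node a cs)
                - size (PTree.node a cs)
              = insPos ts (i + 1 - size (PTree.node a cs)) l by omega,
            hinv]

theorem anc_applyDel (F : Forest α) {j a b : ℕ} (hj1 : 1 ≤ j) (hj2 : j ≤ fsize F)
    (ha1 : 1 ≤ a) (ha2 : a ≤ fsize F) (haj : a ≠ j)
    (hb1 : 1 ≤ b) (hb2 : b ≤ fsize F) (hbj : b ≠ j) :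
    AncestorIdx (applyDel j F) (if a < j then a else a - 1) (if b < j then b else b - 1)
      ↔ AncestorIdx F a b := by
  have hsa := sizeAt_applyDel F j a hj1 hj2 ha1 ha2 haj
  have hpos := sizeAt_pos F ha1 ha2
  unfold AncestorIdx
  rw [hsa]
  split_ifs <;> omega

theorem anc_applyIns (F : Forest α) (y : α) (l r i : ℕ) (heff : applyIns y l r i F ≠ F)
    {a b : ℕ} (ha1 : 1 ≤ a) (ha2 : a ≤ fsize F) (hb1 : 1 ≤ b) (hb2 : b ≤ fsize F) :
    (AncestorIdx (applyIns y l r i F)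
      (if a < insPos F i l then a else a + 1) (if b < insPos F i l then b else b + 1)
      ↔ AncestorIdx F a b) := by
  have hinv : applyDel (insPos F i l) (applyIns y l r i F) = F := applyIns_inverse y l r F i heff
  have hne : applyDel (insPos F i l) (applyIns y l r i F) ≠ applyIns y l r i F := by
    rw [hinv]; exact fun he => heff he.symm
  have hpr : 1 ≤ insPos F i l ∧ insPos F i l ≤ fsize (applyIns y l r i F) := by
    by_contra hc
    exact hne (applyDel_oob _ _ (by omega))
  have hfs := fsize_applyDel (applyIns y l r i F) (insPos F i l) hpr.1 hpr.2
  rw [hinv] at hfs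
  have h := anc_applyDel (applyIns y l r i F) (j := insPos F i l)
    (a := if a < insPos F i l then a else a + 1) (b := if b < insPos F i l then b else b + 1)
    hpr.1 hpr.2 (by split_ifs <;> omega) (by split_ifs <;> omega) (by split_ifs <;> omega)
    (by split_ifs <;> omega) (by split_ifs <;> omega) (by split_ifs <;> omega)
  have kA : (if (if a < insPos F i l then a else a + 1) < insPos F i l
      then (if a < insPos F i l then a else a + 1)
      else (if a < insPos F i l then a else a + 1) - 1) = a := by split_ifs <;> omega
  have kB : (if (if b < insPos F i l then b else b + 1) < insPos F i l
      then (if b < insPos F i l then b else b + 1)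
      else (if b < insPos F i l then b else b + 1) - 1) = b := by split_ifs <;> omega
  rw [kA, kB, hinv] at h
  exact h.symm

theorem step_rep {F H : Forest α} {M : Finset (ℕ × ℕ)} (hM : IsTreeMapping F H M)
    (y : α) (j : ℕ) : IsTreeMapping F (applyRep y j H) M := by
  obtain ⟨hB, hP⟩ := hM
  constructor
  · intro p hp
    have hb := hB p hp
    rw [fsize_applyRep]
    exact hb
  · intro p hp q hq
    have h3 := hP p hp q hq
    exact ⟨h3.1, h3.2.1, by rw [anc_applyRep]; exact h3.2.2⟩

theorem step_del {F H : Forest α} {M : Finset (ℕ × ℕ)} (hM : IsTreeMapping F H M) (j : ℕ)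
    (heff : applyDel j H ≠ H) :
    IsTreeMapping F (applyDel j H)
      ((M.filter (fun p => p.2 < j)) ∪
        ((M.filter (fun p => j < p.2)).image (fun p => (p.1, p.2 - 1)))) := by
  have hj : 1 ≤ j ∧ j ≤ fsize H := by
    by_contra hc
    exact heff (applyDel_oob H j (by omega))
  obtain ⟨hB, hP⟩ := hM
  have hfs := fsize_applyDel H j hj.1 hj.2
  have hrep : ∀ q ∈ (M.filter (fun p => p.2 < j)) ∪
      ((M.filter (fun p => j < p.2)).image (fun p => (p.1, p.2 - 1))),
      ∃ p ∈ M, p.2 ≠ j ∧ q.1 = p.1 ∧ q.2 = (if p.2 < j then p.2 else p.2 - 1) := by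
    intro q hq
    rcases Finset.mem_union.mp hq with hq | hq
    · obtain ⟨hqM, hlt⟩ := Finset.mem_filter.mp hq
      exact ⟨q, hqM, by omega, rfl, by rw [if_pos hlt]⟩
    · obtain ⟨p, hpm, rfl⟩ := Finset.mem_image.mp hq
      obtain ⟨hpM, hlt⟩ := Finset.mem_filter.mp hpm
      exact ⟨p, hpM, by omega, rfl, by rw [if_neg (by omega)]⟩
  constructor
  · intro q hq
    obtain ⟨p, hpM, hpj, h1, h2⟩ := hrep q hq
    obtain ⟨hb1, hb2, hb3, hb4⟩ := hB p hpM
    rw [h1, h2, hfs]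
    refine ⟨hb1, hb2, ?_, ?_⟩ <;> (split_ifs <;> omega)
  · intro q hq q' hq'
    obtain ⟨p, hpM, hpj, h1, h2⟩ := hrep q hq
    obtain ⟨p', hpM', hpj', h1', h2'⟩ := hrep q' hq'
    obtain ⟨hb1, hb2, hb3, hb4⟩ := hB p hpM
    obtain ⟨hb1', hb2', hb3', hb4'⟩ := hB p' hpM'
    obtain ⟨hpe, hple, hpanc⟩ := hP p hpM p' hpM'
    rw [h1, h2, h1', h2']
    refine ⟨?_, ?_, ?_⟩
    · rw [hpe]; constructor <;> (intro hh; split_ifs at hh ⊢ <;> omega)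
    · rw [hple]; constructor <;> (intro hh; split_ifs at hh ⊢ <;> omega)
    · rw [anc_applyDel H hj.1 hj.2 hb3 hb4 hpj hb3' hb4' hpj']
      exact hpanc

theorem step_ins {F H : Forest α} {M : Finset (ℕ × ℕ)} (hM : IsTreeMapping F H M)
    (i : ℕ) (y : α) (l r : ℕ) (heff : applyIns y l r i H ≠ H) :
    IsTreeMapping F (applyIns y l r i H)
      ((M.filter (fun p => p.2 < insPos H i l)) ∪
        ((M.filter (fun p => insPos H i l ≤ p.2)).image (fun p => (p.1, p.2 + 1)))) := by
  have hinv := applyIns_inverse y l r H i heff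
  have hne : applyDel (insPos H i l) (applyIns y l r i H) ≠ applyIns y l r i H := by
    rw [hinv]; exact fun he => heff he.symm
  have hpr : 1 ≤ insPos H i l ∧ insPos H i l ≤ fsize (applyIns y l r i H) := by
    by_contra hc
    exact hne (applyDel_oob _ _ (by omega))
  have hfs0 := fsize_applyDel (applyIns y l r i H) (insPos H i l) hpr.1 hpr.2
  rw [hinv] at hfs0
  have hfs : fsize (applyIns y l r i H) = fsize H + 1 := by omega
  obtain ⟨hB, hP⟩ := hM
  have hrep : ∀ q ∈ (M.filter (fun p => p.2 < insPos H i l)) ∪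
      ((M.filter (fun p => insPos H i l ≤ p.2)).image (fun p => (p.1, p.2 + 1))),
      ∃ p ∈ M, q.1 = p.1 ∧ q.2 = (if p.2 < insPos H i l then p.2 else p.2 + 1) := by
    intro q hq
    rcases Finset.mem_union.mp hq with hq | hq
    · obtain ⟨hqM, hlt⟩ := Finset.mem_filter.mp hq
      exact ⟨q, hqM, rfl, by rw [if_pos hlt]⟩
    · obtain ⟨p, hpm, rfl⟩ := Finset.mem_image.mp hq
      obtain ⟨hpM, hlt⟩ := Finset.mem_filter.mp hpm
      exact ⟨p, hpM, rfl, by rw [if_neg (by omega)]⟩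
  constructor
  · intro q hq
    obtain ⟨p, hpM, h1, h2⟩ := hrep q hq
    obtain ⟨hb1, hb2, hb3, hb4⟩ := hB p hpM
    rw [h1, h2, hfs]
    refine ⟨hb1, hb2, ?_, ?_⟩ <;> (split_ifs <;> omega)
  · intro q hq q' hq'
    obtain ⟨p, hpM, h1, h2⟩ := hrep q hq
    obtain ⟨p', hpM', h1', h2'⟩ := hrep q' hq'
    obtain ⟨hb1, hb2, hb3, hb4⟩ := hB p hpM
    obtain ⟨hb1', hb2', hb3', hb4'⟩ := hB p' hpM'
    obtain ⟨hpe, hple, hpanc⟩ := hP p hpM p' hpM'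
    rw [h1, h2, h1', h2']
    refine ⟨?_, ?_, ?_⟩
    · rw [hpe]; constructor <;> (intro hh; split_ifs at hh ⊢ <;> omega)
    · rw [hple]; constructor <;> (intro hh; split_ifs at hh ⊢ <;> omega)
    · rw [anc_applyIns H y l r i heff hb3 hb4 hb3' hb4']
      exact hpanc

theorem stepMap_preserves {F H : Forest α} {M : Finset (ℕ × ℕ)} (e : Edit α)
    (hM : IsTreeMapping F H M) : IsTreeMapping F (e.apply H) (stepMap H e M) := by
  by_cases h : e.apply H = H
  · unfold stepMap
    rw [if_pos h, h]
    exact hM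
  · unfold stepMap
    rw [if_neg h]
    cases e with
    | rep j y => exact step_rep hM y j
    | del j => exact step_del hM j h
    | ins j y l r => exact step_ins hM j y l r h

theorem isTreeMapping_id (F : Forest α) :
    IsTreeMapping F F ((Finset.Icc 1 (fsize F)).image (fun i => (i, i))) := by
  constructor
  · intro p hp
    obtain ⟨i, hi, rfl⟩ := Finset.mem_image.mp hp
    rw [Finset.mem_Icc] at hi
    exact ⟨hi.1, hi.2, hi.1, hi.2⟩
  · intro p hp q hq
    obtain ⟨i, hi, rfl⟩ := Finset.mem_image.mp hp
    obtain ⟨k, hk, rfl⟩ := Finset.mem_image.mp hq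
    exact ⟨Iff.rfl, Iff.rfl, Iff.rfl⟩

end Aux

/-- For every edit script `δ̄` with `δ̄(X) = Y`, the recursively
constructed set `M_δ̄` is a tree mapping between `X` and `Y`. -/
theorem script_to_mapping {α : Type} (F G : Forest α) (δ : List (Edit α))
    (h : applyScript δ F = G) :
    IsTreeMapping F G (mapOfScript δ F) := by
  subst h
  have key : ∀ (δ : List (Edit α)) (H : Forest α) (M : Finset (ℕ × ℕ)),
      IsTreeMapping F H M →
      IsTreeMapping F (applyScript δ H)
        ((δ.foldl (fun st e => (e.apply st.1, stepMap st.1 e st.2)) (H, M)).2) := by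
    intro δ
    induction δ with
    | nil => intro H M hM; exact hM
    | cons e es ih =>
      intro H M hM
      exact ih (e.apply H) (stepMap H e M) (stepMap_preserves e hM)
  exact key δ F _ (isTreeMapping_id F)

end TED
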